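/- arXiv:1305.2714 — 2 statements merged into one kernel-verified Lean document; each statement's English description precedes it below -/
import Mathlib

section
/- Let C ⊆ ℝⁿ be a nonempty, closed and convex set with x₀ ∈ C, and let v be a standard Gaussian vector on ℝⁿ. For σ > 0 let x*(σv) = Proj(x₀ + σv, C) be the projection of x₀+σv onto C, and set w*(σv) = x*(σv) − x₀. Then lim_{σ→0} E[‖σv − w*(σv)‖₂²]/σ² = D(T_C(x₀)), i.e. the normalized residual of the constrained denoiser converges to the mean squared distance of a standard Gaussian vector to the tangent cone T_C(x₀). -/
open MeasureTheory ProbabilityTheory Filter Topology Metric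
open scoped RealInnerProductSpace ENNReal Pointwise Matrix

noncomputable section

/-- Standard Gaussian measure on `ℝⁿ` (mean zero, identity covariance). -/
def stdGaussian (n : ℕ) : Measure (EuclideanSpace ℝ (Fin n)) :=
  Measure.map (⇑(EuclideanSpace.equiv (Fin n) ℝ).symm)
    (Measure.pi fun _ : Fin n => gaussianReal 0 1)

/-- `D(K)`: mean squared distance of a standard Gaussian vector to `K`. -/
def msd (n : ℕ) (K : Set (EuclideanSpace ℝ (Fin n))) : ℝ :=
  ∫ g, (Metric.infDist g K) ^ 2 ∂(stdGaussian n)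

variable {E : Type*} [NormedAddCommGroup E] [InnerProductSpace ℝ E]

/-- Subdifferential of `f` at `x₀`. -/
def subdiff (f : E → ℝ) (x₀ : E) : Set E :=
  {s | ∀ x, f x₀ + ⟪s, x - x₀⟫ ≤ f x}

/-- Cone generated by a set: `{c • x : c ≥ 0, x ∈ A}`. -/
def coneOf (A : Set E) : Set E :=
  {y | ∃ c : ℝ, 0 ≤ c ∧ ∃ x ∈ A, y = c • x}

/-- Set of feasible directions of `C` at `x₀`. -/
def feasible (C : Set E) (x₀ : E) : Set E := {z | x₀ + z ∈ C}

/-- Tangent cone of `C` at `x₀`: the closure of the cone of feasible directions. -/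
def tangentConeOf (C : Set E) (x₀ : E) : Set E := closure (coneOf (feasible C x₀))

/-- Polar cone of a set `K`. -/
def polarCone (K : Set E) : Set E := {v | ∀ x ∈ K, ⟪v, x⟫ ≤ 0}

open Classical in
/-- Metric projection onto `K` (the unique nearest point when `K` is nonempty,
closed and convex). -/
def projSet (K : Set E) (x : E) : E :=
  if h : ∃ y ∈ K, dist x y = Metric.infDist x K then h.choose else x

/-- Matrix-vector multiplication as a map between Euclidean spaces. -/
def matVec {m n : ℕ} (A : Matrix (Fin m) (Fin n) ℝ) (x : EuclideanSpace ℝ (Fin n)) :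
    EuclideanSpace ℝ (Fin m) :=
  (EuclideanSpace.equiv (Fin m) ℝ).symm (A.mulVec (EuclideanSpace.equiv (Fin n) ℝ x))

/-- Statistical dimension of `K`: `E ‖Proj(g,K)‖²` for standard Gaussian `g`. -/
def statDim (n : ℕ) (K : Set (EuclideanSpace ℝ (Fin n))) : ℝ :=
  ∫ g, ‖projSet K g‖ ^ 2 ∂(stdGaussian n)

end

/-- Borel/product measurable structure on real matrices. -/
instance matrixMeasurableSpace {m n : ℕ} : MeasurableSpace (Matrix (Fin m) (Fin n) ℝ) :=
  (inferInstance : MeasurableSpace (Fin m → Fin n → ℝ))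


section Aux

open ProbabilityTheory Real

private lemma integrable_sq_gaussianReal :
    Integrable (fun x : ℝ => x ^ 2) (gaussianReal 0 1) := by
  rw [gaussianReal_of_var_ne_zero 0 one_ne_zero,
    integrable_withDensity_iff (measurable_gaussianPDF 0 1)
      (ae_of_all _ fun x => ENNReal.ofReal_lt_top)]
  have h2 : Integrable (fun x : ℝ => x ^ 2 * Real.exp (-(2⁻¹ : ℝ) * x ^ 2)) := by
    have h := integrable_rpow_mul_exp_neg_mul_sq (b := (2⁻¹ : ℝ)) (by norm_num) (s := (2 : ℝ))
      (by norm_num)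
    have h2' : ∀ x : ℝ, x ^ (2 : ℝ) = x ^ 2 := fun x => by
      rw [show (2 : ℝ) = ((2 : ℕ) : ℝ) by norm_num, Real.rpow_natCast]
    simpa [h2'] using h
  have heq : (fun x : ℝ => x ^ 2 * (gaussianPDF 0 1 x).toReal)
      = fun x : ℝ => (√(2 * π * (1 : NNReal)))⁻¹ * (x ^ 2 * Real.exp (-(2⁻¹ : ℝ) * x ^ 2)) := by
    funext x
    rw [gaussianPDF, ENNReal.toReal_ofReal (gaussianPDFReal_nonneg _ _ _), gaussianPDFReal]
    push_cast
    ring_nf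
  rw [heq]
  exact h2.const_mul _

private lemma map_eval_pi_gaussian {n : ℕ} (i : Fin n) :
    Measure.map (Function.eval i) (Measure.pi fun _ : Fin n => gaussianReal 0 1)
      = gaussianReal 0 1 := by
  refine Measure.ext fun s hs => ?_
  rw [Measure.map_apply (measurable_pi_apply i) hs]
  have hpre : Function.eval i ⁻¹' s
      = Set.pi Set.univ (Function.update (fun _ : Fin n => (Set.univ : Set ℝ)) i s) := by
    ext x
    simp only [Set.mem_preimage, Set.mem_univ_pi, Function.eval]
    constructor
    · intro h j
      rcases eq_or_ne j i with rfl | hj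
      · simpa using h
      · simp [Function.update_apply, hj]
    · intro h
      simpa using h i
  rw [hpre, Measure.pi_pi]
  rw [Finset.prod_eq_single i (fun j _ hj => by simp [Function.update_apply, hj]) (by simp)]
  simp

private lemma integrable_norm_sq_stdGaussian {n : ℕ} :
    Integrable (fun w : EuclideanSpace ℝ (Fin n) => ‖w‖ ^ 2) (stdGaussian n) := by
  rw [_root_.stdGaussian, integrable_map_measure (g := fun w : EuclideanSpace ℝ (Fin n) => ‖w‖ ^ 2)
      ((continuous_norm.pow 2).aestronglyMeasurable)
      ((EuclideanSpace.equiv (Fin n) ℝ).symm.continuous.measurable.aemeasurable)]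
  have hcomp : ((fun w : EuclideanSpace ℝ (Fin n) => ‖w‖ ^ 2)
        ∘ ⇑(EuclideanSpace.equiv (Fin n) ℝ).symm)
      = fun x : Fin n → ℝ => ∑ i, x i ^ 2 := by
    funext x
    simp only [Function.comp_apply, EuclideanSpace.norm_eq]
    rw [Real.sq_sqrt (by positivity)]
    congr 1
    funext i
    simp [sq_abs]
  rw [hcomp]
  refine integrable_finset_sum _ fun i _ => ?_
  have h' : Integrable (fun x : ℝ => x ^ 2)
      (Measure.map (Function.eval i) (Measure.pi fun _ : Fin n => gaussianReal 0 1)) := by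
    rw [map_eval_pi_gaussian (n := n) i]
    exact integrable_sq_gaussianReal
  exact (integrable_map_measure ((continuous_pow 2).aestronglyMeasurable)
      (measurable_pi_apply i).aemeasurable).1 h' 

private lemma dist_projSet_eq_infDist {n : ℕ} {K : Set (EuclideanSpace ℝ (Fin n))}
    (hcl : IsClosed K) (hne : K.Nonempty) (x : EuclideanSpace ℝ (Fin n)) :
    dist x (projSet K x) = Metric.infDist x K := by
  obtain ⟨y, hy, hyd⟩ := hcl.exists_infDist_eq_dist hne x
  have h : ∃ y ∈ K, dist x y = Metric.infDist x K := ⟨y, hy, hyd.symm⟩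
  rw [projSet, dif_pos h]
  exact h.choose_spec.2

end Aux

/-- Residual of the constrained denoiser in the small-noise limit.
With `x*(σv) = Proj(x₀ + σv, C)` and `w*(σv) = x*(σv) − x₀`, one has
`lim_{σ→0} E‖σv − w*(σv)‖²/σ² = D(T_C(x₀))`. -/
theorem statement12 {n : ℕ} (C : Set (EuclideanSpace ℝ (Fin n)))
    (hCne : C.Nonempty) (hCcl : IsClosed C) (hCconv : Convex ℝ C)
    (x₀ : EuclideanSpace ℝ (Fin n)) (hx₀ : x₀ ∈ C) :
    Tendsto
      (fun σ : ℝ =>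
        (∫ w, ‖σ • w - (projSet C (x₀ + σ • w) - x₀)‖ ^ 2 ∂(stdGaussian n)) / σ ^ 2)
      (nhdsWithin 0 (Set.Ioi 0)) (nhds (msd n (tangentConeOf C x₀))) := by
  classical
  set K : ℝ → Set (EuclideanSpace ℝ (Fin n)) := fun σ => {z | x₀ + σ • z ∈ C} with hKdef
  have hK0 : ∀ σ : ℝ, (0 : EuclideanSpace ℝ (Fin n)) ∈ K σ := fun σ => by
    show x₀ + σ • (0 : EuclideanSpace ℝ (Fin n)) ∈ C
    simpa using hx₀
  have hKmono : ∀ {σ τ : ℝ}, 0 < σ → σ ≤ τ → K τ ⊆ K σ := by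
    intro σ τ hσ hστ z hz
    have hτ : (0 : ℝ) < τ := lt_of_lt_of_le hσ hστ
    have ha : (0:ℝ) ≤ 1 - σ / τ := by
      rw [sub_nonneg]; exact (div_le_one hτ).2 hστ
    have hb : (0:ℝ) ≤ σ / τ := by positivity
    have key : (1 - σ / τ) • x₀ + (σ / τ) • (x₀ + τ • z) = x₀ + σ • z := by
      rw [smul_add, smul_smul, div_mul_cancel₀ _ hτ.ne']
      module
    have hmem := hCconv hx₀ hz ha hb (by ring)
    rw [key] at hmem
    exact hmem
  have hKconeOf : ∀ {σ : ℝ}, 0 < σ → K σ ⊆ coneOf (feasible C x₀) := by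
    intro σ hσ z hz
    exact ⟨σ⁻¹, by positivity, σ • z, hz,
      by rw [smul_smul, inv_mul_cancel₀ hσ.ne', one_smul]⟩
  have hconeOfK : ∀ y ∈ coneOf (feasible C x₀), ∃ σ : ℝ, 0 < σ ∧ y ∈ K σ := by
    rintro y ⟨c, hc, x, hxf, rfl⟩
    rcases eq_or_lt_of_le hc with rfl | hc
    · refine ⟨1, one_pos, ?_⟩
      rw [zero_smul]
      exact hK0 1
    · refine ⟨c⁻¹, by positivity, ?_⟩
      show x₀ + c⁻¹ • (c • x) ∈ C
      rw [smul_smul, inv_mul_cancel₀ hc.ne', one_smul]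
      exact hxf
  have hKT : ∀ {σ : ℝ}, 0 < σ → K σ ⊆ tangentConeOf C x₀ := by
    intro σ hσ
    exact (hKconeOf hσ).trans subset_closure
  have h0T : (0 : EuclideanSpace ℝ (Fin n)) ∈ tangentConeOf C x₀ := hKT one_pos (hK0 1)
  -- distance identity
  have hdist : ∀ σ : ℝ, 0 < σ → ∀ w : EuclideanSpace ℝ (Fin n),
      Metric.infDist (x₀ + σ • w) C = σ * Metric.infDist w (K σ) := by
    intro σ hσ w
    have hisom : Isometry (fun c : EuclideanSpace ℝ (Fin n) => -x₀ + c) :=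
      Isometry.of_dist_eq fun a b => by rw [dist_add_left]
    have hset : σ • K σ = (fun c : EuclideanSpace ℝ (Fin n) => -x₀ + c) '' C := by
      ext y
      simp only [Set.mem_smul_set, Set.mem_image]
      constructor
      · rintro ⟨z, hz, rfl⟩
        exact ⟨x₀ + σ • z, hz, by abel⟩
      · rintro ⟨c, hc, rfl⟩
        refine ⟨σ⁻¹ • (-x₀ + c), ?_, smul_inv_smul₀ hσ.ne' _⟩
        show x₀ + σ • (σ⁻¹ • (-x₀ + c)) ∈ C
        rw [smul_inv_smul₀ hσ.ne']
        have : x₀ + (-x₀ + c) = c := by abel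
        rw [this]; exact hc
    have hpt : -x₀ + (x₀ + σ • w) = σ • w := by abel
    calc Metric.infDist (x₀ + σ • w) C
        = Metric.infDist (-x₀ + (x₀ + σ • w))
            ((fun c : EuclideanSpace ℝ (Fin n) => -x₀ + c) '' C) :=
          (Metric.infDist_image hisom).symm
      _ = Metric.infDist (σ • w) (σ • K σ) := by rw [hpt, hset]
      _ = ‖σ‖ * Metric.infDist w (K σ) := infDist_smul₀ hσ.ne' _ _
      _ = σ * Metric.infDist w (K σ) := by rw [Real.norm_of_nonneg hσ.le]
  have hnorm : ∀ σ : ℝ, 0 < σ → ∀ w : EuclideanSpace ℝ (Fin n),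
      ‖σ • w - (projSet C (x₀ + σ • w) - x₀)‖ = σ * Metric.infDist w (K σ) := by
    intro σ hσ w
    have h1 : σ • w - (projSet C (x₀ + σ • w) - x₀)
        = (x₀ + σ • w) - projSet C (x₀ + σ • w) := by abel
    rw [h1, ← dist_eq_norm, dist_projSet_eq_infDist hCcl hCne, hdist σ hσ w]
  -- integrability
  have hIntNormSq := integrable_norm_sq_stdGaussian (n := n)
  have hint : ∀ S : Set (EuclideanSpace ℝ (Fin n)), (0 : EuclideanSpace ℝ (Fin n)) ∈ S →
      Integrable (fun w => Metric.infDist w S ^ 2) (stdGaussian n) := by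
    intro S hS
    refine hIntNormSq.mono' ((continuous_infDist_pt S).pow 2).aestronglyMeasurable
      (ae_of_all _ fun w => ?_)
    rw [Real.norm_of_nonneg (by positivity)]
    have h1 : Metric.infDist w S ≤ ‖w‖ := by
      simpa [dist_zero_right] using Metric.infDist_le_dist_of_mem hS
    exact pow_le_pow_left₀ Metric.infDist_nonneg h1 2
  set F : ℝ → ℝ := fun σ => ∫ w, Metric.infDist w (K σ) ^ 2 ∂(stdGaussian n) with hFdef
  set L : ℝ := msd n (tangentConeOf C x₀) with hLdef
  have hLleF : ∀ {σ : ℝ}, 0 < σ → L ≤ F σ := by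
    intro σ hσ
    refine integral_mono (hint _ h0T) (hint _ (hK0 σ)) fun w => ?_
    exact pow_le_pow_left₀ Metric.infDist_nonneg
      (Metric.infDist_le_infDist_of_subset (hKT hσ) ⟨0, hK0 σ⟩) 2
  have hFmono : ∀ {σ τ : ℝ}, 0 < σ → σ ≤ τ → F σ ≤ F τ := by
    intro σ τ hσ hστ
    refine integral_mono (hint _ (hK0 σ)) (hint _ (hK0 τ)) fun w => ?_
    exact pow_le_pow_left₀ Metric.infDist_nonneg
      (Metric.infDist_le_infDist_of_subset (hKmono hσ hστ) ⟨0, hK0 τ⟩) 2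
  have hσk : ∀ k : ℕ, (0:ℝ) < ((k : ℝ) + 1)⁻¹ := fun k => by positivity
  -- pointwise convergence
  have hptw : ∀ w : EuclideanSpace ℝ (Fin n),
      Tendsto (fun k : ℕ => Metric.infDist w (K (((k : ℝ) + 1)⁻¹)))
        atTop (𝓝 (Metric.infDist w (tangentConeOf C x₀))) := by
    intro w
    have hTU : Metric.infDist w (tangentConeOf C x₀)
        = Metric.infDist w (coneOf (feasible C x₀)) := Metric.infDist_closure
    rw [hTU]
    refine tendsto_order.2 ⟨fun b hb => ?_, fun b hb => ?_⟩
    · refine Eventually.of_forall fun k => lt_of_lt_of_le hb ?_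
      exact Metric.infDist_le_infDist_of_subset (hKconeOf (hσk k)) ⟨0, hK0 _⟩
    · have hne : (coneOf (feasible C x₀)).Nonempty := ⟨0, hKconeOf one_pos (hK0 1)⟩
      obtain ⟨y, hy, hyd⟩ := (Metric.infDist_lt_iff hne).1 hb
      obtain ⟨τ, hτ, hyK⟩ := hconeOfK y hy
      have htend : Tendsto (fun k : ℕ => ((k : ℝ) + 1)⁻¹) atTop (𝓝 0) := by
        simpa [one_div] using (tendsto_one_div_add_atTop_nhds_zero_nat :
          Tendsto (fun n : ℕ => 1 / ((n : ℝ) + 1)) atTop (𝓝 0))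
      have hev : ∀ᶠ k : ℕ in atTop, ((k : ℝ) + 1)⁻¹ ≤ τ :=
        (htend.eventually_lt_const hτ).mono fun k hk => hk.le
      filter_upwards [hev] with k hk
      calc Metric.infDist w (K (((k : ℝ) + 1)⁻¹)) ≤ dist w y :=
            Metric.infDist_le_dist_of_mem (hKmono (hσk k) hk hyK)
        _ < b := hyd
  -- dominated convergence along the sequence
  have hFseq : Tendsto (fun k : ℕ => F (((k : ℝ) + 1)⁻¹)) atTop (𝓝 L) := by
    refine tendsto_integral_of_dominated_convergence (fun w => ‖w‖ ^ 2)
      (fun k => ((continuous_infDist_pt _).pow 2).aestronglyMeasurable)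
      hIntNormSq (fun k => ae_of_all _ fun w => ?_)
      (ae_of_all _ fun w => (hptw w).pow 2)
    rw [Real.norm_of_nonneg (by positivity)]
    have h1 : Metric.infDist w (K (((k : ℝ) + 1)⁻¹)) ≤ ‖w‖ := by
      simpa [dist_zero_right] using Metric.infDist_le_dist_of_mem (hK0 (((k : ℝ) + 1)⁻¹))
    exact pow_le_pow_left₀ Metric.infDist_nonneg h1 2
  -- final assembly
  rw [Metric.tendsto_nhdsWithin_nhds]
  intro ε hε
  have hevF : ∀ᶠ k : ℕ in atTop, F (((k : ℝ) + 1)⁻¹) < L + ε :=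
    hFseq.eventually_lt_const (by linarith)
  obtain ⟨k, hk⟩ := hevF.exists
  refine ⟨((k : ℝ) + 1)⁻¹, hσk k, fun {σ} hσ hσd => ?_⟩
  have hσ0 : (0:ℝ) < σ := hσ
  have hσδ : σ ≤ ((k : ℝ) + 1)⁻¹ := by
    rw [Real.dist_eq, sub_zero, abs_of_pos hσ0] at hσd
    exact hσd.le
  have hGF : (∫ w, ‖σ • w - (projSet C (x₀ + σ • w) - x₀)‖ ^ 2 ∂(stdGaussian n)) / σ ^ 2
      = F σ := by
    have hfun : (fun w : EuclideanSpace ℝ (Fin n) =>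
          ‖σ • w - (projSet C (x₀ + σ • w) - x₀)‖ ^ 2)
        = fun w => σ ^ 2 * Metric.infDist w (K σ) ^ 2 := by
      funext w
      rw [hnorm σ hσ0 w, mul_pow]
    rw [hfun, integral_const_mul, mul_div_cancel_left₀]
    exact pow_ne_zero 2 hσ0.ne'
  rw [hGF, Real.dist_eq, abs_of_nonneg (sub_nonneg.2 (hLleF hσ0))]
  have hFF : F σ ≤ F (((k : ℝ) + 1)⁻¹) := hFmono hσ0 hσδ
  linarith
end

section
/- Let f : ℝⁿ → ℝ be a convex function and x₀ ∈ ℝⁿ. Suppose there exist a nontrivial linear subspace T ⊆ ℝⁿ and a nonzero vector e ∈ T such that Proj(s, T) = e for every s ∈ ∂f(x₀). For v ∈ ℝⁿ, let τ(v) denote the smallest element of {τ ≥ 0 : τ minimizes dist(v, τ∂f(x₀)) over τ ≥ 0}. Then τ is (1/‖e‖₂)-Lipschitz: for all v₁, v₂ ∈ ℝⁿ, |τ(v₁) − τ(v₂)| ≤ ‖v₁ − v₂‖₂ / ‖e‖₂. -/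
open MeasureTheory ProbabilityTheory Filter Topology Metric
open scoped RealInnerProductSpace ENNReal Pointwise Matrix

section auxx

variable {E : Type*} [NormedAddCommGroup E] [InnerProductSpace ℝ E]

lemma subdiff_convex (f : E → ℝ) (x₀ : E) : Convex ℝ (subdiff f x₀) := by
  intro s₁ h₁ s₂ h₂ a b ha hb hab x
  have e1 := h₁ x
  have e2 := h₂ x
  have hx : f x₀ + ⟪a • s₁ + b • s₂, x - x₀⟫
      = a * (f x₀ + ⟪s₁, x - x₀⟫) + b * (f x₀ + ⟪s₂, x - x₀⟫) := by
    rw [inner_add_left, real_inner_smul_left, real_inner_smul_left]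
    linear_combination (-(f x₀)) * hab
  have := add_le_add (mul_le_mul_of_nonneg_left e1 ha) (mul_le_mul_of_nonneg_left e2 hb)
  calc f x₀ + ⟪a • s₁ + b • s₂, x - x₀⟫ ≤ a * f x + b * f x := by rw [hx]; linarith
    _ = f x := by linear_combination f x * hab

lemma subdiff_closed (f : E → ℝ) (x₀ : E) : IsClosed (subdiff f x₀) := by
  have : subdiff f x₀ = ⋂ x, {s : E | f x₀ + ⟪s, x - x₀⟫ ≤ f x} := by
    ext s; simp [subdiff, Set.mem_iInter]
  rw [this]
  exact isClosed_iInter fun x =>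
    isClosed_le (continuous_const.add (continuous_id.inner continuous_const)) continuous_const

lemma subdiff_bounded [FiniteDimensional ℝ E] (f : E → ℝ) (hf : ConvexOn ℝ Set.univ f) (x₀ : E) :
    ∃ M : ℝ, 0 ≤ M ∧ ∀ s ∈ subdiff f x₀, ‖s‖ ≤ M := by
  have hcont : ContinuousOn f (Metric.closedBall x₀ 1) :=
    ((hf.continuousOn isOpen_univ).mono (Set.subset_univ _))
  obtain ⟨B, hB⟩ := (isCompact_closedBall x₀ 1).exists_bound_of_continuousOn hcont
  have hx₀B : ‖f x₀‖ ≤ B := hB x₀ (Metric.mem_closedBall_self zero_le_one)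
  refine ⟨B + ‖f x₀‖, by have := norm_nonneg (f x₀); linarith, fun s hs => ?_⟩
  rcases eq_or_ne s 0 with rfl | hs0
  · rw [norm_zero]; linarith [norm_nonneg (f x₀)]
  · have hsn : (0:ℝ) < ‖s‖ := norm_pos_iff.mpr hs0
    have hmem : x₀ + ‖s‖⁻¹ • s ∈ Metric.closedBall x₀ 1 := by
      simp [Metric.mem_closedBall, dist_self_add_left, norm_smul,
        abs_of_nonneg (inv_nonneg.mpr hsn.le), inv_mul_le_one₀, hsn.ne']
    have h1 := hs (x₀ + ‖s‖⁻¹ • s)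
    rw [add_sub_cancel_left, real_inner_smul_right, real_inner_self_eq_norm_sq] at h1
    have h2 : ‖s‖⁻¹ * ‖s‖ ^ 2 = ‖s‖ := by field_simp [pow_two]
    rw [h2] at h1
    have h3 : f (x₀ + ‖s‖⁻¹ • s) ≤ B := (le_abs_self _).trans (hB _ hmem)
    have h4 : -f x₀ ≤ ‖f x₀‖ := (neg_le_abs _)
    linarith

lemma coneOf_convex {K : Set E} (hK : Convex ℝ K) : Convex ℝ (coneOf K) := by
  rintro _ ⟨c₁, hc₁, s₁, hs₁, rfl⟩ _ ⟨c₂, hc₂, s₂, hs₂, rfl⟩ a b ha hb hab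
  rcases eq_or_lt_of_le (by positivity : (0:ℝ) ≤ a * c₁ + b * c₂) with hc | hc
  · have h1 : a * c₁ = 0 := by nlinarith [mul_nonneg ha hc₁, mul_nonneg hb hc₂]
    have h2 : b * c₂ = 0 := by nlinarith [mul_nonneg ha hc₁, mul_nonneg hb hc₂]
    refine ⟨0, le_refl _, s₁, hs₁, ?_⟩
    rw [smul_smul, smul_smul, h1, h2]
    simp
  · set c := a * c₁ + b * c₂ with hcdef
    refine ⟨c, hc.le, (a * c₁ / c) • s₁ + (b * c₂ / c) • s₂,
      hK hs₁ hs₂ (by positivity) (by positivity) (by field_simp; exact hcdef.symm), ?_⟩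
    have h1 : c * (a * c₁ / c) = a * c₁ := by field_simp
    have h2 : c * (b * c₂ / c) = b * c₂ := by field_simp
    conv_rhs => rw [smul_add, smul_smul, smul_smul, h1, h2]
    rw [smul_smul, smul_smul]

end auxx

/-- Lipschitzness of the optimal scaling.
If all subgradients in `∂f(x₀)` have the same (nonzero) orthogonal projection `e` onto a
nontrivial subspace `T`, then the smallest optimal scaling
`τ(v) = min argmin_{τ≥0} dist(v, τ∂f(x₀))` is `(1/‖e‖)`-Lipschitz. -/
theorem statement13 {n : ℕ} (f : EuclideanSpace ℝ (Fin n) → ℝ)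
    (hf : ConvexOn ℝ Set.univ f) (x₀ : EuclideanSpace ℝ (Fin n))
    (T : Submodule ℝ (EuclideanSpace ℝ (Fin n))) (hT : T ≠ ⊥)
    (e : EuclideanSpace ℝ (Fin n)) (heT : e ∈ T) (he0 : e ≠ 0)
    (hproj : ∀ s ∈ subdiff f x₀,
      ((Submodule.orthogonalProjectionOnto T s : T) : EuclideanSpace ℝ (Fin n)) = e)
    (tau : EuclideanSpace ℝ (Fin n) → ℝ)
    (htau : ∀ v, tau v = sInf {τ : ℝ | 0 ≤ τ ∧ ∀ τ' : ℝ, 0 ≤ τ' →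
      Metric.infDist v (τ • subdiff f x₀) ≤ Metric.infDist v (τ' • subdiff f x₀)}) :
    ∀ v₁ v₂ : EuclideanSpace ℝ (Fin n), |tau v₁ - tau v₂| ≤ ‖v₁ - v₂‖ / ‖e‖ := by
  intro v₁ v₂
  have he2 : (0:ℝ) < ‖e‖ := norm_pos_iff.mpr he0
  rcases (subdiff f x₀).eq_empty_or_nonempty with hKe | hKne
  · have hzero : ∀ v : EuclideanSpace ℝ (Fin n), tau v = 0 := by
      intro v
      rw [htau v]
      have hset : {τ : ℝ | 0 ≤ τ ∧ ∀ τ' : ℝ, 0 ≤ τ' →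
          Metric.infDist v (τ • subdiff f x₀) ≤ Metric.infDist v (τ' • subdiff f x₀)}
          = Set.Ici 0 := by
        ext τ
        simp [hKe, Metric.infDist_empty]
      rw [hset, csInf_Ici]
    rw [hzero v₁, hzero v₂, sub_zero, abs_zero]
    positivity
  · obtain ⟨s₀, hs₀⟩ := hKne
    have hinner : ∀ s ∈ subdiff f x₀, ⟪s, e⟫ = ‖e‖ ^ 2 := by
      intro s hs
      have h1 : s - e ∈ Tᗮ := by
        rw [← hproj s hs]; exact Submodule.sub_starProjection_mem_orthogonal (K := T) s
      have h2 : ⟪e, s - e⟫ = 0 := (Submodule.mem_orthogonal T (s - e)).mp h1 e heT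
      rw [inner_sub_right] at h2
      rw [real_inner_comm, ← real_inner_self_eq_norm_sq]
      linarith
    obtain ⟨M, hM0, hM⟩ := subdiff_bounded f hf x₀
    have hKconv : Convex ℝ (subdiff f x₀) := subdiff_convex f x₀
    have hKcomp : IsCompact (subdiff f x₀) :=
      Metric.isCompact_of_isClosed_isBounded (subdiff_closed f x₀)
        (isBounded_iff_forall_norm_le.mpr ⟨M, hM⟩)
    have hCconv : Convex ℝ (coneOf (subdiff f x₀)) := coneOf_convex hKconv
    have attain : ∀ (v : EuclideanSpace ℝ (Fin n)) (τ : ℝ),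
        ∃ y ∈ τ • subdiff f x₀, Metric.infDist v (τ • subdiff f x₀) = dist v y := fun v τ =>
      (hKcomp.smul τ).exists_infDist_eq_dist (Set.Nonempty.smul_set ⟨s₀, hs₀⟩) v
    have key : ∀ v : EuclideanSpace ℝ (Fin n), ∃ x ∈ coneOf (subdiff f x₀),
        (∀ w ∈ coneOf (subdiff f x₀), ⟪v - x, w - x⟫ ≤ 0) ∧ tau v = ⟪x, e⟫ / ‖e‖ ^ 2 := by
      intro v
      have hglip : ∀ τ τ' : ℝ, Metric.infDist v (τ • subdiff f x₀)
          ≤ Metric.infDist v (τ' • subdiff f x₀) + |τ - τ'| * M := by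
        intro τ τ'
        obtain ⟨y, hy, hyd⟩ := attain v τ'
        obtain ⟨s, hsK, rfl⟩ := hy
        have h1 : Metric.infDist v (τ • subdiff f x₀) ≤ dist v (τ • s) :=
          Metric.infDist_le_dist_of_mem (Set.smul_mem_smul_set hsK)
        have h2 : dist v (τ • s) ≤ dist v (τ' • s) + dist (τ' • s) (τ • s) := dist_triangle _ _ _
        have h3 : dist (τ' • s) (τ • s) = |τ' - τ| * ‖s‖ := by
          rw [dist_eq_norm, ← sub_smul, norm_smul, Real.norm_eq_abs]
        have h4 : |τ' - τ| * ‖s‖ ≤ |τ - τ'| * M := by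
          rw [abs_sub_comm τ' τ]
          exact mul_le_mul_of_nonneg_left (hM s hsK) (abs_nonneg _) |>.trans
            (mul_le_mul_of_nonneg_right le_rfl (by positivity))
        rw [hyd]
        linarith
      have hgcont : Continuous fun τ : ℝ => Metric.infDist v (τ • subdiff f x₀) := by
        refine (LipschitzWith.of_dist_le_mul (K := NNReal.mk M hM0) fun τ τ' => ?_).continuous
        rw [Real.dist_eq, Real.dist_eq, NNReal.coe_mk, mul_comm, abs_sub_le_iff]
        have h1 := hglip τ τ'
        have h2 := hglip τ' τ
        rw [abs_sub_comm τ' τ] at h2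
        exact ⟨by linarith, by linarith⟩
      have hglb : ∀ τ : ℝ, 0 ≤ τ → τ * ‖e‖ - ‖v‖ ≤ Metric.infDist v (τ • subdiff f x₀) := by
        intro τ hτ
        obtain ⟨y, hy, hyd⟩ := attain v τ
        obtain ⟨s, hsK, rfl⟩ := hy
        have h1 : ⟪τ • s - v, e⟫ ≤ ‖τ • s - v‖ * ‖e‖ := real_inner_le_norm _ _
        have h2 : ⟪τ • s - v, e⟫ = τ * ‖e‖ ^ 2 - ⟪v, e⟫ := by
          rw [inner_sub_left, real_inner_smul_left, hinner s hsK]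
        have h3 : ⟪v, e⟫ ≤ ‖v‖ * ‖e‖ := real_inner_le_norm _ _
        have h4 : ‖τ • s - v‖ = dist v (τ • s) := by rw [dist_eq_norm, norm_sub_rev]
        rw [hyd, ← h4, ← mul_le_mul_iff_of_pos_right he2]
        nlinarith
      have hg0 : (0:ℝ) ≤ Metric.infDist v ((0:ℝ) • subdiff f x₀) := Metric.infDist_nonneg
      set R : ℝ := (Metric.infDist v ((0:ℝ) • subdiff f x₀) + ‖v‖) / ‖e‖ + 1 with hR
      have hR0 : (0:ℝ) ≤ R := by positivity
      obtain ⟨τs, hτsmem, hτsmin⟩ := isCompact_Icc.exists_isMinOn (Set.nonempty_Icc.mpr hR0)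
        hgcont.continuousOn
      rw [Set.mem_Icc] at hτsmem
      have hτs0 : 0 ≤ τs := hτsmem.1
      have hglobal : ∀ τ' : ℝ, 0 ≤ τ' →
          Metric.infDist v (τs • subdiff f x₀) ≤ Metric.infDist v (τ' • subdiff f x₀) := by
        intro τ' hτ'
        rcases le_or_gt τ' R with h | h
        · exact isMinOn_iff.mp hτsmin τ' (Set.mem_Icc.mpr ⟨hτ', h⟩)
        · have h1 := hglb τ' hτ'
          have h2 : R * ‖e‖ = Metric.infDist v ((0:ℝ) • subdiff f x₀) + ‖v‖ + ‖e‖ := by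
            rw [hR]; field_simp
          have h3 : Metric.infDist v (τs • subdiff f x₀)
              ≤ Metric.infDist v ((0:ℝ) • subdiff f x₀) :=
            isMinOn_iff.mp hτsmin 0 (Set.mem_Icc.mpr ⟨le_refl 0, hR0⟩)
          nlinarith
      obtain ⟨x, hxmem, hxd⟩ := attain v τs
      obtain ⟨sx, hsxK, hxeq⟩ := hxmem
      have hxC : x ∈ coneOf (subdiff f x₀) := ⟨τs, hτs0, sx, hsxK, hxeq.symm⟩
      have hdC : ∀ w ∈ coneOf (subdiff f x₀), dist v x ≤ ‖v - w‖ := by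
        rintro w ⟨c, hc, s, hsK, rfl⟩
        have h1 : Metric.infDist v (c • subdiff f x₀) ≤ dist v (c • s) :=
          Metric.infDist_le_dist_of_mem (Set.smul_mem_smul_set hsK)
        rw [← dist_eq_norm]
        calc dist v x = Metric.infDist v (τs • subdiff f x₀) := hxd.symm
          _ ≤ Metric.infDist v (c • subdiff f x₀) := hglobal c hc
          _ ≤ dist v (c • s) := h1
      have hbdd : BddBelow (Set.range fun w : coneOf (subdiff f x₀) => ‖v - (w : EuclideanSpace ℝ (Fin n))‖) := by
        refine ⟨0, ?_⟩
        rintro r ⟨w, rfl⟩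
        exact norm_nonneg _
      have mkinf : ∀ y : EuclideanSpace ℝ (Fin n), y ∈ coneOf (subdiff f x₀) →
          dist v y = dist v x → ‖v - y‖ = ⨅ w : coneOf (subdiff f x₀), ‖v - (w : EuclideanSpace ℝ (Fin n))‖ := by
        intro y hyC hyx
        haveI : Nonempty ↑(coneOf (subdiff f x₀)) := ⟨⟨y, hyC⟩⟩
        apply le_antisymm
        · refine le_ciInf fun w => ?_
          rw [← dist_eq_norm, hyx]
          exact hdC w w.2
        · exact ciInf_le hbdd (⟨y, hyC⟩ : coneOf (subdiff f x₀))
      have hinf := mkinf x hxC rfl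
      have hvar : ∀ w ∈ coneOf (subdiff f x₀), ⟪v - x, w - x⟫ ≤ 0 :=
        (norm_eq_iInf_iff_real_inner_le_zero hCconv hxC).mp hinf
      have hxe : ⟪x, e⟫ = τs * ‖e‖ ^ 2 := by
        rw [← hxeq, real_inner_smul_left, hinner sx hsxK]
      refine ⟨x, hxC, hvar, ?_⟩
      rw [htau v]
      have hAset : {τ : ℝ | 0 ≤ τ ∧ ∀ τ' : ℝ, 0 ≤ τ' →
          Metric.infDist v (τ • subdiff f x₀) ≤ Metric.infDist v (τ' • subdiff f x₀)}
          = {τs} := by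
        ext τ
        simp only [Set.mem_setOf_eq, Set.mem_singleton_iff]
        constructor
        · rintro ⟨hτ0, hmin⟩
          have h1 : Metric.infDist v (τ • subdiff f x₀)
              ≤ Metric.infDist v (τs • subdiff f x₀) := hmin τs hτs0
          have h2 := hglobal τ hτ0
          obtain ⟨y, hymem, hyd⟩ := attain v τ
          obtain ⟨sy, hsyK, hyeq⟩ := hymem
          have hyC : y ∈ coneOf (subdiff f x₀) := ⟨τ, hτ0, sy, hsyK, hyeq.symm⟩
          have hdyx : dist v y = dist v x := by
            rw [← hyd, ← hxd]; linarith
          have hyinf := mkinf y hyC hdyx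
          have hvar' := (norm_eq_iInf_iff_real_inner_le_zero hCconv hyC).mp hyinf
          have h3 := hvar y hyC
          have h4 := hvar' x hxC
          have hid : ⟪v - x, y - x⟫ + ⟪v - y, x - y⟫ = ‖y - x‖ ^ 2 := by
            have hn := real_inner_self_eq_norm_sq (y - x)
            have a1 : v - y = v - x - (y - x) := by abel
            have a2 : x - y = -(y - x) := by abel
            have b1 : ⟪v - y, x - y⟫ = -(⟪v - x, y - x⟫ - ⟪y - x, y - x⟫) := by
              rw [a1, a2, inner_neg_right, inner_sub_left]
            linarith
          have h7 : ‖y - x‖ = 0 := by nlinarith [norm_nonneg (y - x)]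
          have h8 : y = x := sub_eq_zero.mp (norm_eq_zero.mp h7)
          have hye : ⟪y, e⟫ = τ * ‖e‖ ^ 2 := by
            rw [← hyeq, real_inner_smul_left, hinner sy hsyK]
          rw [h8, hxe] at hye
          have := mul_right_cancel₀ (by positivity : (‖e‖:ℝ) ^ 2 ≠ 0) hye
          linarith [this]
        · rintro rfl
          exact ⟨hτs0, hglobal⟩
      rw [hAset, csInf_singleton, hxe]
      field_simp
    obtain ⟨x₁, hx₁C, hvar₁, ht₁⟩ := key v₁
    obtain ⟨x₂, hx₂C, hvar₂, ht₂⟩ := key v₂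
    have e1 := hvar₁ x₂ hx₂C
    have e2 := hvar₂ x₁ hx₁C
    have hid : ⟪v₁ - x₁, x₂ - x₁⟫ + ⟪v₂ - x₂, x₁ - x₂⟫
        = ⟪v₁ - v₂, x₂ - x₁⟫ + ‖x₂ - x₁‖ ^ 2 := by
      have hn := real_inner_self_eq_norm_sq (x₂ - x₁)
      have a1 : v₁ - x₁ = v₁ - v₂ + (x₂ - x₁) + (v₂ - x₂) := by abel
      have a2 : x₁ - x₂ = -(x₂ - x₁) := by abel
      have b1 : ⟪v₂ - x₂, x₁ - x₂⟫ = -⟪v₂ - x₂, x₂ - x₁⟫ := by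
        rw [a2, inner_neg_right]
      have b2 : ⟪v₁ - x₁, x₂ - x₁⟫
          = ⟪v₁ - v₂, x₂ - x₁⟫ + ⟪x₂ - x₁, x₂ - x₁⟫ + ⟪v₂ - x₂, x₂ - x₁⟫ := by
        rw [a1, inner_add_left, inner_add_left]
      linarith
    have hle : ‖x₂ - x₁‖ ^ 2 ≤ ⟪v₁ - v₂, x₁ - x₂⟫ := by
      have a2 : x₁ - x₂ = -(x₂ - x₁) := by abel
      rw [a2, inner_neg_right]
      linarith
    have hcs := real_inner_le_norm (v₁ - v₂) (x₁ - x₂)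
    have hnn : ‖x₁ - x₂‖ = ‖x₂ - x₁‖ := norm_sub_rev _ _
    rw [hnn] at hcs
    have hxx : ‖x₂ - x₁‖ ≤ ‖v₁ - v₂‖ := by
      nlinarith [norm_nonneg (x₂ - x₁), norm_nonneg (v₁ - v₂)]
    have h9 : ‖x₁ - x₂‖ ≤ ‖v₁ - v₂‖ := hnn ▸ hxx
    have hie : |⟪x₁ - x₂, e⟫| ≤ ‖x₁ - x₂‖ * ‖e‖ := abs_real_inner_le_norm _ _
    have h10 : |⟪x₁ - x₂, e⟫| ≤ ‖v₁ - v₂‖ * ‖e‖ :=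
      hie.trans (mul_le_mul_of_nonneg_right h9 he2.le)
    have hpos : (0:ℝ) < ‖e‖ ^ 2 := by positivity
    rw [ht₁, ht₂, div_sub_div_same, ← inner_sub_left, abs_div, abs_of_pos hpos,
      div_le_div_iff₀ hpos he2]
    calc |⟪x₁ - x₂, e⟫| * ‖e‖ ≤ (‖v₁ - v₂‖ * ‖e‖) * ‖e‖ :=
        mul_le_mul_of_nonneg_right h10 he2.le
      _ = ‖v₁ - v₂‖ * ‖e‖ ^ 2 := by ring
end
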